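/- Let (p_n)_{n≥1} be a sequence of positive integers, K ≥ 1 a real number, and suppose p_{n+1} ≥ K · p_n · (p_n + 1) holds for all sufficiently large n. Let l be an integer with 1 ≤ l ≤ ⌊K⌋. Then the number Σ_{n=1}^∞ (−1)^n l^n / p_n is irrational. -/

import Mathlib

open Filter Topology

private lemma alt_sum_bounds (t : ℕ → ℝ) (ht0 : ∀ n, 0 ≤ t n)
    (hdec : ∀ n, t (n + 1) ≤ t n) (k : ℕ) :
    0 ≤ ∑ j ∈ Finset.range k, (-1 : ℝ) ^ j * t j ∧
      ∑ j ∈ Finset.range k, (-1 : ℝ) ^ j * t j ≤ t 0 := by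
  have hstep : ∀ n, ∑ j ∈ Finset.range (n + 1), (-1 : ℝ) ^ j * t j
      = (∑ j ∈ Finset.range n, (-1 : ℝ) ^ j * t j) + (-1 : ℝ) ^ n * t n :=
    fun n => Finset.sum_range_succ _ n
  have key : ∀ m, 0 ≤ ∑ j ∈ Finset.range (2 * m), (-1 : ℝ) ^ j * t j ∧
      (∑ j ∈ Finset.range (2 * m), (-1 : ℝ) ^ j * t j) + t (2 * m) ≤ t 0 := by
    intro m
    induction m with
    | zero => simp
    | succ m ih =>
      have e1 : 2 * (m + 1) = (2 * m + 1) + 1 := by ring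
      have hpe : (-1 : ℝ) ^ (2 * m) = 1 := by
        rw [pow_mul]; norm_num
      have hpo : (-1 : ℝ) ^ (2 * m + 1) = -1 := by
        rw [pow_succ, hpe]; norm_num
      have h1 : ∑ j ∈ Finset.range (2 * (m + 1)), (-1 : ℝ) ^ j * t j
          = (∑ j ∈ Finset.range (2 * m), (-1 : ℝ) ^ j * t j) + t (2 * m) - t (2 * m + 1) := by
        rw [e1, hstep, hstep, hpe, hpo]; ring
      rw [h1]
      have h2 : t (2 * (m + 1)) ≤ t (2 * m + 1) := by
        have := hdec (2 * m + 1); rw [show 2 * m + 1 + 1 = 2 * (m + 1) by ring] at this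
        exact this
      constructor
      · nlinarith [ih.1, hdec (2 * m), ht0 (2 * m + 1)]
      · nlinarith [ih.2]
  rcases Nat.even_or_odd k with ⟨m, hm⟩ | ⟨m, hm⟩
  · have hk : k = 2 * m := by omega
    subst hk
    exact ⟨(key m).1, by nlinarith [(key m).2, ht0 (2 * m)]⟩
  · have hk : k = 2 * m + 1 := by omega
    subst hk
    rw [hstep]
    have hpe : (-1 : ℝ) ^ (2 * m) = 1 := by rw [pow_mul]; norm_num
    rw [hpe]
    exact ⟨by nlinarith [(key m).1, ht0 (2 * m)], by nlinarith [(key m).2]⟩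

set_option maxHeartbeats 1000000 in
/-- If `(p_n)` is a sequence of positive integers with `p_{n+1} ≥ K p_n (p_n + 1)` for all
sufficiently large `n`, where `K ≥ 1`, and `l` is an integer with `1 ≤ l ≤ ⌊K⌋`, then
`∑_{n=1}^∞ (-1)^n l^n / p_n` is irrational. -/
theorem irrational_alternating_series (p : ℕ → ℕ) (hp : ∀ n, 1 ≤ n → 0 < p n)
    (K : ℝ) (hK : 1 ≤ K)
    (hgrow : ∃ N : ℕ, ∀ n, N ≤ n → K * (p n : ℝ) * ((p n : ℝ) + 1) ≤ (p (n + 1) : ℝ))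
    (l : ℤ) (hl1 : 1 ≤ l) (hlK : l ≤ ⌊K⌋)
    (S : ℝ)
    (hS : Tendsto
      (fun N : ℕ => ∑ n ∈ Finset.range N, (-1 : ℝ) ^ (n + 1) * (l : ℝ) ^ (n + 1) / (p (n + 1) : ℝ))
      atTop (𝓝 S)) :
    Irrational S := by
  obtain ⟨N₀, hgrow⟩ := hgrow
  rintro ⟨q, hq⟩
  -- basic positivity facts
  have hbpos : (0 : ℝ) < (q.den : ℝ) := by exact_mod_cast q.pos
  have hlR : (1 : ℝ) ≤ (l : ℝ) := by exact_mod_cast hl1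
  have hlK' : (l : ℝ) ≤ K := by
    have h1 : (l : ℝ) ≤ (⌊K⌋ : ℝ) := by exact_mod_cast hlK
    linarith [Int.floor_le K]
  have hpR : ∀ n, (0 : ℝ) < (p (n + 1) : ℝ) := fun n => by
    exact_mod_cast hp (n + 1) (Nat.succ_le_succ (Nat.zero_le n))
  -- the absolute values of the terms
  set t : ℕ → ℝ := fun n => (l : ℝ) ^ (n + 1) / (p (n + 1) : ℝ) with htdef'
  have htdef : ∀ n, t n = (l : ℝ) ^ (n + 1) / (p (n + 1) : ℝ) := fun _ => rfl
  have htpos : ∀ n, 0 < t n := fun n =>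
    div_pos (pow_pos (lt_of_lt_of_le one_pos hlR) _) (hpR n)
  -- key decay estimate
  have hA : ∀ n, N₀ ≤ n + 1 → ((p (n + 1) : ℝ) + 1) * t (n + 1) ≤ t n := by
    intro n hn
    have hg := hgrow (n + 1) hn
    rw [htdef, htdef, ← mul_div_assoc, div_le_div_iff₀ (hpR (n + 1)) (hpR n)]
    have hl0 : (0 : ℝ) < (l : ℝ) := lt_of_lt_of_le one_pos hlR
    have hpow : (0 : ℝ) < (l : ℝ) ^ (n + 1) := pow_pos hl0 _
    have h1 : (l : ℝ) * ((p (n + 1) : ℝ) * ((p (n + 1) : ℝ) + 1)) ≤ (p (n + 2) : ℝ) := by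
      nlinarith [hpR (n + 1)]
    have h2 : (l : ℝ) ^ (n + 1 + 1) = (l : ℝ) ^ (n + 1) * l := pow_succ _ _
    nlinarith [mul_le_mul_of_nonneg_left h1 hpow.le, hpR (n + 1), hpR n]
  have hdec : ∀ n, N₀ ≤ n + 1 → t (n + 1) ≤ t n := by
    intro n hn
    have := hA n hn
    nlinarith [htpos (n + 1), hpR (n + 1)]
  have hstrict : ∀ n, N₀ ≤ n + 1 → t (n + 1) < t n := by
    intro n hn
    have := hA n hn
    have hp1 : (1 : ℝ) ≤ (p (n + 1) : ℝ) := by exact_mod_cast hp (n + 1) (by omega)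
    nlinarith [htpos (n + 1)]
  -- partial sums
  set PS : ℕ → ℝ := fun N => ∑ n ∈ Finset.range N,
      (-1 : ℝ) ^ (n + 1) * (l : ℝ) ^ (n + 1) / (p (n + 1) : ℝ) with hPSdef
  have hS' : Tendsto PS atTop (𝓝 S) := hS
  set T : ℕ → ℝ := fun N => S - PS N with hTdef'
  have hTdef : ∀ N, T N = S - PS N := fun _ => rfl
  have hterm : ∀ n, (-1 : ℝ) ^ (n + 1) * (l : ℝ) ^ (n + 1) / (p (n + 1) : ℝ)
      = (-1 : ℝ) ^ (n + 1) * t n := by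
    intro n; rw [htdef]; ring
  have hIco : ∀ N M, N ≤ M → PS M - PS N
      = (-1 : ℝ) ^ (N + 1) * ∑ j ∈ Finset.range (M - N), (-1 : ℝ) ^ j * t (N + j) := by
    intro N M h
    have h1 : PS M - PS N = ∑ n ∈ Finset.Ico N M,
        (-1 : ℝ) ^ (n + 1) * (l : ℝ) ^ (n + 1) / (p (n + 1) : ℝ) :=
      (Finset.sum_Ico_eq_sub _ h).symm
    rw [h1, Finset.sum_Ico_eq_sum_range, Finset.mul_sum]
    apply Finset.sum_congr rfl
    intro j _
    rw [hterm (N + j), htdef (N + j)]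
    rw [show N + j + 1 = (N + 1) + j by ring, pow_add]
    ring
  have hsq : ∀ N : ℕ, (-1 : ℝ) ^ (N + 1) * (-1 : ℝ) ^ (N + 1) = 1 := by
    intro N
    rw [← pow_add]
    exact Even.neg_one_pow ⟨N + 1, by ring⟩
  -- tail bounds
  have hTub : ∀ N, N₀ ≤ N → 0 ≤ (-1 : ℝ) ^ (N + 1) * T N ∧ (-1 : ℝ) ^ (N + 1) * T N ≤ t N := by
    intro N hN
    have htend : Tendsto (fun M => (-1 : ℝ) ^ (N + 1) * (PS M - PS N)) atTop
        (𝓝 ((-1 : ℝ) ^ (N + 1) * T N)) := by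
      rw [hTdef]
      exact ((hS'.sub_const (PS N)).const_mul _)
    have hev : ∀ᶠ M in atTop, 0 ≤ (-1 : ℝ) ^ (N + 1) * (PS M - PS N)
        ∧ (-1 : ℝ) ^ (N + 1) * (PS M - PS N) ≤ t N := by
      filter_upwards [eventually_ge_atTop N] with M hM
      rw [hIco N M hM, ← mul_assoc, hsq, one_mul]
      have hb := alt_sum_bounds (fun j => t (N + j)) (fun j => (htpos _).le)
        (fun j => hdec (N + j) (by omega)) (M - N)
      simpa using hb
    exact ⟨ge_of_tendsto htend (hev.mono fun M h => h.1),
      le_of_tendsto htend (hev.mono fun M h => h.2)⟩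
  -- recursion T N = ±(t N - t (N+1)) + T (N+2)
  have hTrec : ∀ N, (-1 : ℝ) ^ (N + 1) * T N
      = (t N - t (N + 1)) + (-1 : ℝ) ^ (N + 2 + 1) * T (N + 2) := by
    intro N
    have h1 : PS (N + 2) = PS N + (-1 : ℝ) ^ (N + 1) * t N + (-1 : ℝ) ^ (N + 2) * t (N + 1) := by
      simp only [hPSdef]
      rw [Finset.sum_range_succ, Finset.sum_range_succ]
      rw [hterm N, hterm (N + 1)]
    have h2 : T N = T (N + 2) + (-1 : ℝ) ^ (N + 1) * t N + (-1 : ℝ) ^ (N + 2) * t (N + 1) := by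
      rw [hTdef, hTdef, h1]; ring
    rw [h2]
    have e1 : (-1 : ℝ) ^ (N + 2) = -(-1 : ℝ) ^ (N + 1) := by rw [pow_succ]; ring
    have e2 : (-1 : ℝ) ^ (N + 2 + 1) = (-1 : ℝ) ^ (N + 1) := by
      rw [pow_succ, pow_succ]; ring
    rw [e1, e2]
    linear_combination (t N - t (N + 1)) * hsq N
  have hTlb : ∀ N, N₀ ≤ N → t N - t (N + 1) ≤ (-1 : ℝ) ^ (N + 1) * T N := by
    intro N hN
    rw [hTrec N]
    nlinarith [(hTub (N + 2) (by omega)).1]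
  have hTpos : ∀ N, N₀ ≤ N → 0 < (-1 : ℝ) ^ (N + 1) * T N := by
    intro N hN
    have := hTlb N hN
    nlinarith [hstrict N (by omega)]
  have hTslb : ∀ N, N₀ ≤ N → t N - t (N + 1) < (-1 : ℝ) ^ (N + 1) * T N := by
    intro N hN
    rw [hTrec N]
    nlinarith [hTpos (N + 2) (by omega)]
  -- integer structure
  set Q : ℕ → ℕ := fun N => ∏ m ∈ Finset.range N, p (m + 1) with hQdef
  have hQpos : ∀ N, (0 : ℝ) < (Q N : ℝ) := by
    intro N
    simp only [hQdef]
    push_cast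
    exact Finset.prod_pos fun m _ => hpR m
  set c : ℕ → ℤ := fun N => ∑ n ∈ Finset.range N,
      (-1) ^ (n + 1) * l ^ (n + 1) * ∏ m ∈ (Finset.range N).erase n, (p (m + 1) : ℤ) with hcdef
  have hQc : ∀ N, (Q N : ℝ) * PS N = (c N : ℝ) := by
    intro N
    simp only [hQdef, hcdef, hPSdef]
    push_cast
    rw [Finset.mul_sum]
    apply Finset.sum_congr rfl
    intro n hn
    have hsplit : ∏ m ∈ Finset.range N, (p (m + 1) : ℝ)
        = (p (n + 1) : ℝ) * ∏ m ∈ (Finset.range N).erase n, (p (m + 1) : ℝ) :=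
      (Finset.mul_prod_erase _ _ hn).symm
    rw [hsplit]
    field_simp [(hpR n).ne']
  set z : ℕ → ℤ := fun N => q.num * (Q N : ℤ) - (q.den : ℤ) * c N with hzdef
  have hnum : (q.num : ℝ) = S * (q.den : ℝ) := by
    rw [← hq, Rat.cast_def]
    field_simp
  have hz : ∀ N, (z N : ℝ) = (q.den : ℝ) * (Q N : ℝ) * T N := by
    intro N
    rw [hzdef]
    push_cast
    rw [hnum, hTdef]
    linear_combination ((q.den : ℝ)) * hQc N
  -- descent
  have habs : ∀ N, N₀ ≤ N → |(z N : ℝ)| = (q.den : ℝ) * (Q N : ℝ) * ((-1 : ℝ) ^ (N + 1) * T N) := by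
    intro N hN
    rw [hz N]
    have h1 : |T N| = (-1 : ℝ) ^ (N + 1) * T N := by
      rcases Nat.even_or_odd (N + 1) with he | ho
      · rw [he.neg_one_pow, one_mul]
        have := hTpos N hN
        rw [he.neg_one_pow, one_mul] at this
        exact abs_of_pos this
      · rw [ho.neg_one_pow]
        have := hTpos N hN
        rw [ho.neg_one_pow] at this
        rw [abs_of_neg (by linarith)]
        ring
    rw [abs_mul, abs_mul, abs_of_pos hbpos, abs_of_pos (hQpos N), h1, mul_assoc]
  have hQsucc : ∀ N, (Q (N + 1) : ℝ) = (Q N : ℝ) * (p (N + 1) : ℝ) := by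
    intro N
    simp only [hQdef]
    push_cast
    exact Finset.prod_range_succ _ _
  have hdesc : ∀ N, N₀ ≤ N → |z (N + 1)| < |z N| := by
    intro N hN
    have key : |(z (N + 1) : ℝ)| < |(z N : ℝ)| := by
      rw [habs N hN, habs (N + 1) (by omega), hQsucc N]
      have h1 : (-1 : ℝ) ^ (N + 1 + 1) * T (N + 1) ≤ t (N + 1) := (hTub (N + 1) (by omega)).2
      have h2 : ((p (N + 1) : ℝ) + 1) * t (N + 1) ≤ t N := hA N (by omega)
      have h3 : t N - t (N + 1) < (-1 : ℝ) ^ (N + 1) * T N := hTslb N hN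
      have h4 : 0 < (-1 : ℝ) ^ (N + 1 + 1) * T (N + 1) := hTpos (N + 1) (by omega)
      have hq1 : 0 < (q.den : ℝ) * (Q N : ℝ) := mul_pos hbpos (hQpos N)
      have hp1 : 0 < (p (N + 1) : ℝ) := hpR N
      have s1 : (p (N + 1) : ℝ) * ((-1 : ℝ) ^ (N + 1 + 1) * T (N + 1))
          ≤ (p (N + 1) : ℝ) * t (N + 1) := mul_le_mul_of_nonneg_left h1 hp1.le
      have s2 : (p (N + 1) : ℝ) * t (N + 1) ≤ t N - t (N + 1) := by linarith
      have s3 : (p (N + 1) : ℝ) * ((-1 : ℝ) ^ (N + 1 + 1) * T (N + 1))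
          < (-1 : ℝ) ^ (N + 1) * T N := lt_of_le_of_lt (s1.trans s2) h3
      nlinarith [mul_lt_mul_of_pos_left s3 hq1]
    have : |((z (N + 1) : ℤ) : ℝ)| < |((z N : ℤ) : ℝ)| := key
    rw [← Int.cast_abs, ← Int.cast_abs] at this
    exact_mod_cast this
  have hzne : ∀ N, N₀ ≤ N → z N ≠ 0 := by
    intro N hN h0
    have := hTpos N hN
    have h1 : (z N : ℝ) = 0 := by rw [h0]; simp
    rw [hz N] at h1
    have hT0 : T N = 0 := by
      have := mul_pos hbpos (hQpos N)
      rcases mul_eq_zero.mp h1 with h | h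
      · rcases mul_eq_zero.mp h with h | h <;> nlinarith
      · exact h
    rw [hT0, mul_zero] at this
    exact lt_irrefl 0 this
  -- infinite descent contradiction
  set w : ℕ → ℕ := fun k => (z (N₀ + k)).natAbs with hwdef
  have hw1 : ∀ k, 1 ≤ w k := by
    intro k
    exact Int.natAbs_pos.mpr (hzne (N₀ + k) (by omega))
  have hwdec : ∀ k, w (k + 1) < w k := by
    intro k
    have h := hdesc (N₀ + k) (by omega)
    rw [show N₀ + k + 1 = N₀ + (k + 1) by ring, Int.abs_eq_natAbs, Int.abs_eq_natAbs] at h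
    exact_mod_cast h
  have hle : ∀ k, w k + k ≤ w 0 := by
    intro k
    induction k with
    | zero => simp
    | succ k ih =>
      have := hwdec k
      omega
  have := hle (w 0)
  have := hw1 (w 0)
  omega
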